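/- Let A ∈ ℝ^{m×n} have full column rank n, b ∈ ℝ^m, c ∈ ℝⁿ, ε > 0, and let A_ε ∈ ℝ^{(m+1)×n} be obtained by appending the row εcᵀ below A. Let x_ε = (A_εᵀA_ε)⁻¹(Aᵀb + c), r_ε = b − Ax_ε, γ = 1 − 2εcᵀx_ε. Consider the linear map L_ε: ℝ^{m×n} × ℝ^m × ℝⁿ → ℝⁿ given by L_ε(E, f, g) = (A_εᵀA_ε)⁻¹Eᵀr_ε − (A_εᵀA_ε)⁻¹AᵀEx_ε + (A_εᵀA_ε)⁻¹Aᵀf + γ(A_εᵀA_ε)⁻¹g. Then the operator norm of L_ε with respect to the norm ‖[E, f, g]‖_F = sqrt(‖E‖_F² + ‖f‖² + ‖g‖²) on the domain and the Euclidean norm on ℝⁿ equals sqrt(‖M̄_ε‖), where M̄_ε = (γ² + ‖r_ε‖²)(A_εᵀA_ε)⁻² + (1 + ‖x_ε‖²)(A_εᵀA_ε)⁻¹AᵀA(A_εᵀA_ε)⁻¹ − 2 sym(B_ε), B_ε = (A_εᵀA_ε)⁻¹Aᵀr_ε x_εᵀ(A_εᵀA_ε)⁻¹, sym(B_ε) =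 (B_ε + B_εᵀ)/2, and ‖M̄_ε‖ is the spectral norm of M̄_ε. -/
import Mathlib


open Matrix

/-- Euclidean norm of a vector. -/
noncomputable def euclNorm {k : Type*} [Fintype k] (v : k → ℝ) : ℝ :=
  Real.sqrt (∑ i, v i ^ 2)

/-- Frobenius norm of a matrix. -/
noncomputable def frobNorm {k l : Type*} [Fintype k] [Fintype l]
    (M : Matrix k l ℝ) : ℝ :=
  Real.sqrt (∑ i, ∑ j, M i j ^ 2)

/-- Spectral (Euclidean operator) norm of a matrix, as the supremum of
`‖M y‖ / ‖y‖` over nonzero `y`. -/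
noncomputable def specNorm {k l : Type*} [Fintype k] [Fintype l]
    (M : Matrix k l ℝ) : ℝ :=
  sSup {t : ℝ | ∃ y : l → ℝ, y ≠ 0 ∧ t = euclNorm (M *ᵥ y) / euclNorm y}

section aux

variable {k l : Type*} [Fintype k] [Fintype l]

lemma stmt15_euclNorm_nonneg (v : k → ℝ) : 0 ≤ euclNorm v := Real.sqrt_nonneg _

lemma stmt15_euclNorm_sq (v : k → ℝ) : euclNorm v ^ 2 = ∑ i, v i ^ 2 :=
  Real.sq_sqrt (by positivity)

lemma stmt15_euclNorm_sq' (v : k → ℝ) : euclNorm v ^ 2 = v ⬝ᵥ v := by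
  rw [stmt15_euclNorm_sq]
  simp [dotProduct, sq]

lemma stmt15_frobNorm_sq (M : Matrix k l ℝ) : frobNorm M ^ 2 = ∑ i, ∑ j, M i j ^ 2 :=
  Real.sq_sqrt (by positivity)

lemma stmt15_sum_sq_eq_zero {v : k → ℝ} (h : ∑ i, v i ^ 2 = 0) : v = 0 := by
  funext i
  have := (Finset.sum_eq_zero_iff_of_nonneg (fun j _ => sq_nonneg (v j))).1 h i (Finset.mem_univ i)
  exact pow_eq_zero_iff two_ne_zero |>.1 this

lemma stmt15_sum_sq_mat_eq_zero {M : Matrix k l ℝ} (h : ∑ i, ∑ j, M i j ^ 2 = 0) : M = 0 := by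
  ext i j
  have hrow := (Finset.sum_eq_zero_iff_of_nonneg
    (fun i _ => Finset.sum_nonneg fun j _ => sq_nonneg (M i j))).1 h i (Finset.mem_univ i)
  have := (Finset.sum_eq_zero_iff_of_nonneg (fun j _ => sq_nonneg (M i j))).1 hrow j
    (Finset.mem_univ j)
  simpa using pow_eq_zero_iff two_ne_zero |>.1 this

lemma stmt15_euclNorm_pos {v : k → ℝ} (h : v ≠ 0) : 0 < euclNorm v := by
  apply Real.sqrt_pos.2
  rcases (Finset.sum_nonneg fun i (_ : i ∈ Finset.univ) => sq_nonneg (v i)).lt_or_eq with h' | h'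
  · exact h'
  · exact absurd (stmt15_sum_sq_eq_zero h'.symm) h

lemma stmt15_dot_le (v w : k → ℝ) : v ⬝ᵥ w ≤ euclNorm v * euclNorm w := by
  simpa [euclNorm, dotProduct] using Real.sum_mul_le_sqrt_mul_sqrt Finset.univ v w

lemma stmt15_dot_self_nonneg (v : k → ℝ) : 0 ≤ v ⬝ᵥ v := by
  rw [← stmt15_euclNorm_sq']; positivity

lemma stmt15_mulVec_frob_le (M : Matrix k l ℝ) (y : l → ℝ) :
    euclNorm (M *ᵥ y) ≤ frobNorm M * euclNorm y := by
  have h1 : ∑ i, (M *ᵥ y) i ^ 2 ≤ (∑ i, ∑ j, M i j ^ 2) * ∑ j, y j ^ 2 := by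
    rw [Finset.sum_mul]
    refine Finset.sum_le_sum fun i _ => ?_
    simpa [Matrix.mulVec, dotProduct] using
      Finset.sum_mul_sq_le_sq_mul_sq Finset.univ (fun j => M i j) y
  calc euclNorm (M *ᵥ y) = Real.sqrt (∑ i, (M *ᵥ y) i ^ 2) := rfl
    _ ≤ Real.sqrt ((∑ i, ∑ j, M i j ^ 2) * ∑ j, y j ^ 2) := Real.sqrt_le_sqrt h1
    _ = frobNorm M * euclNorm y := Real.sqrt_mul (by positivity) _

lemma stmt15_vecMulVec_transpose (u : k → ℝ) (v : l → ℝ) :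
    (vecMulVec u v)ᵀ = vecMulVec v u := by
  ext i j; simp [Matrix.vecMulVec_apply, mul_comm]

lemma stmt15_vecMulVec_mulVec (u : k → ℝ) (v w : l → ℝ) :
    vecMulVec u v *ᵥ w = (v ⬝ᵥ w) • u := by
  funext i
  simp only [Matrix.mulVec, Matrix.vecMulVec_apply, dotProduct, Pi.smul_apply,
    smul_eq_mul, Finset.sum_mul]
  exact Finset.sum_congr rfl fun j _ => by ring

lemma stmt15_mulVec_dot (M : Matrix k l ℝ) (u : l → ℝ) (v : k → ℝ) :
    (M *ᵥ u) ⬝ᵥ v = u ⬝ᵥ (Mᵀ *ᵥ v) := by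
  rw [dotProduct_comm, Matrix.dotProduct_mulVec, dotProduct_comm]
  congr 1
  conv_lhs => rw [← Matrix.transpose_transpose M]
  rw [Matrix.vecMul_transpose]

lemma stmt15_dot_mulVec_sum (E : Matrix k l ℝ) (u : k → ℝ) (v : l → ℝ) :
    u ⬝ᵥ (E *ᵥ v) = ∑ i, ∑ j, E i j * (u i * v j) := by
  simp only [dotProduct, Matrix.mulVec, Finset.mul_sum]
  exact Finset.sum_congr rfl fun i _ => Finset.sum_congr rfl fun j _ => by ring

end aux

lemma stmt15_cs3 {m n : ℕ} (E E' : Matrix (Fin m) (Fin n) ℝ) (f f' : Fin m → ℝ)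
    (g g' : Fin n → ℝ) :
    (∑ i, ∑ j, E i j * E' i j) + f ⬝ᵥ f' + g ⬝ᵥ g' ≤
      Real.sqrt ((∑ i, ∑ j, E i j ^ 2) + (∑ i, f i ^ 2) + ∑ j, g j ^ 2) *
      Real.sqrt ((∑ i, ∑ j, E' i j ^ 2) + (∑ i, f' i ^ 2) + ∑ j, g' j ^ 2) := by
  classical
  have h := Real.sum_mul_le_sqrt_mul_sqrt
    (Finset.univ : Finset ((Fin m × Fin n) ⊕ (Fin m ⊕ Fin n)))
    (Sum.elim (fun p => E p.1 p.2) (Sum.elim f g))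
    (Sum.elim (fun p => E' p.1 p.2) (Sum.elim f' g'))
  simpa [Fintype.sum_sum_type, Fintype.sum_prod_type, dotProduct, add_assoc] using h

lemma stmt15_adj {m n : ℕ} (P : Matrix (Fin n) (Fin n) ℝ) (hP : Pᵀ = P)
    (A : Matrix (Fin m) (Fin n) ℝ) (re : Fin m → ℝ) (xe : Fin n → ℝ) (γ : ℝ)
    (y : Fin n → ℝ) (E : Matrix (Fin m) (Fin n) ℝ) (f : Fin m → ℝ) (g : Fin n → ℝ) :
    (P *ᵥ (Eᵀ *ᵥ re) - (P * Aᵀ) *ᵥ (E *ᵥ xe) + (P * Aᵀ) *ᵥ f + γ • (P *ᵥ g)) ⬝ᵥ y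
      = (∑ i, ∑ j, E i j * (vecMulVec re (P *ᵥ y) - vecMulVec (A *ᵥ (P *ᵥ y)) xe) i j)
        + f ⬝ᵥ (A *ᵥ (P *ᵥ y)) + g ⬝ᵥ (γ • (P *ᵥ y)) := by
  have hQt : (P * Aᵀ)ᵀ = A * P := by
    rw [Matrix.transpose_mul, Matrix.transpose_transpose, hP]
  rw [add_dotProduct, add_dotProduct, sub_dotProduct]
  rw [stmt15_mulVec_dot P (Eᵀ *ᵥ re) y, hP]
  rw [stmt15_mulVec_dot (P * Aᵀ) (E *ᵥ xe) y, hQt]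
  rw [stmt15_mulVec_dot (P * Aᵀ) f y, hQt]
  rw [smul_dotProduct, stmt15_mulVec_dot P g y, hP]
  rw [stmt15_mulVec_dot Eᵀ re (P *ᵥ y), Matrix.transpose_transpose]
  simp only [← Matrix.mulVec_mulVec]
  rw [dotProduct_comm (E *ᵥ xe), stmt15_dot_mulVec_sum, stmt15_dot_mulVec_sum]
  rw [dotProduct_smul]
  simp only [Matrix.sub_apply, Matrix.vecMulVec_apply, mul_sub, Finset.sum_sub_distrib]

lemma stmt15_main {m n : ℕ} (P : Matrix (Fin n) (Fin n) ℝ) (hP : Pᵀ = P)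
    (A : Matrix (Fin m) (Fin n) ℝ) (re : Fin m → ℝ) (xe : Fin n → ℝ) (γ : ℝ)
    (y : Fin n → ℝ) :
    P *ᵥ ((vecMulVec re (P *ᵥ y) - vecMulVec (A *ᵥ (P *ᵥ y)) xe)ᵀ *ᵥ re)
      - (P * Aᵀ) *ᵥ ((vecMulVec re (P *ᵥ y) - vecMulVec (A *ᵥ (P *ᵥ y)) xe) *ᵥ xe)
      + (P * Aᵀ) *ᵥ (A *ᵥ (P *ᵥ y))
      + γ • (P *ᵥ (γ • (P *ᵥ y)))
    = ((γ ^ 2 + euclNorm re ^ 2) • (P * P)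
        + (1 + euclNorm xe ^ 2) • (P * (Aᵀ * A) * P)
        - (2 : ℝ) • ((1 / 2 : ℝ) • ((P * Aᵀ * vecMulVec re xe * P)
            + (P * Aᵀ * vecMulVec re xe * P)ᵀ))) *ᵥ y := by
  simp only [Matrix.transpose_sub, stmt15_vecMulVec_transpose, Matrix.sub_mulVec,
    Matrix.add_mulVec, Matrix.smul_mulVec, Matrix.transpose_mul,
    Matrix.transpose_transpose, hP, ← Matrix.mulVec_mulVec,
    stmt15_vecMulVec_mulVec, Matrix.mulVec_smul, Matrix.mulVec_sub, Matrix.mulVec_add, stmt15_euclNorm_sq', smul_smul]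
  rw [dotProduct_comm xe (P *ᵥ y), dotProduct_comm re (A *ᵥ (P *ᵥ y))]
  module

noncomputable def stmt15NY {m n : ℕ} (P : Matrix (Fin n) (Fin n) ℝ)
    (A : Matrix (Fin m) (Fin n) ℝ) (re : Fin m → ℝ) (xe : Fin n → ℝ) (γ : ℝ)
    (y : Fin n → ℝ) : ℝ :=
  (∑ i, ∑ j, (vecMulVec re (P *ᵥ y) - vecMulVec (A *ᵥ (P *ᵥ y)) xe) i j ^ 2)
    + (∑ i, (A *ᵥ (P *ᵥ y)) i ^ 2) + ∑ j, (γ • (P *ᵥ y)) j ^ 2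

lemma stmt15NY_nonneg {m n : ℕ} (P : Matrix (Fin n) (Fin n) ℝ)
    (A : Matrix (Fin m) (Fin n) ℝ) (re : Fin m → ℝ) (xe : Fin n → ℝ) (γ : ℝ)
    (y : Fin n → ℝ) : 0 ≤ stmt15NY P A re xe γ y := by
  unfold stmt15NY; positivity

theorem stmt15_abstract {m n : ℕ} (hn : 0 < n)
    (P : Matrix (Fin n) (Fin n) ℝ) (hP : Pᵀ = P)
    (A : Matrix (Fin m) (Fin n) ℝ) (re : Fin m → ℝ) (xe : Fin n → ℝ) (γ : ℝ)
    (Mbar : Matrix (Fin n) (Fin n) ℝ)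
    (hM : Mbar = (γ ^ 2 + euclNorm re ^ 2) • (P * P)
        + (1 + euclNorm xe ^ 2) • (P * (Aᵀ * A) * P)
        - (2 : ℝ) • ((1 / 2 : ℝ) • ((P * Aᵀ * vecMulVec re xe * P)
            + (P * Aᵀ * vecMulVec re xe * P)ᵀ))) :
    sSup {t : ℝ | ∃ (E : Matrix (Fin m) (Fin n) ℝ) (f : Fin m → ℝ) (g : Fin n → ℝ),
        ¬(E = 0 ∧ f = 0 ∧ g = 0) ∧
        t = euclNorm (P *ᵥ (Eᵀ *ᵥ re) - (P * Aᵀ) *ᵥ (E *ᵥ xe) + (P * Aᵀ) *ᵥ f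
              + γ • (P *ᵥ g))
            / Real.sqrt (frobNorm E ^ 2 + euclNorm f ^ 2 + euclNorm g ^ 2)} =
      Real.sqrt (specNorm Mbar) := by
  classical
  have i0 : Fin n := ⟨0, hn⟩
  set T : Set ℝ :=
    {t : ℝ | ∃ y : Fin n → ℝ, y ≠ 0 ∧ t = euclNorm (Mbar *ᵥ y) / euclNorm y} with hT
  have hspec : specNorm Mbar = sSup T := rfl
  -- the identity L(L* y) = Mbar y
  have hMy : ∀ y : Fin n → ℝ,
      P *ᵥ ((vecMulVec re (P *ᵥ y) - vecMulVec (A *ᵥ (P *ᵥ y)) xe)ᵀ *ᵥ re)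
        - (P * Aᵀ) *ᵥ ((vecMulVec re (P *ᵥ y) - vecMulVec (A *ᵥ (P *ᵥ y)) xe) *ᵥ xe)
        + (P * Aᵀ) *ᵥ (A *ᵥ (P *ᵥ y))
        + γ • (P *ᵥ (γ • (P *ᵥ y))) = Mbar *ᵥ y := by
    intro y
    rw [hM]
    exact stmt15_main P hP A re xe γ y
  -- squared norm of L* y
  have hNYval : ∀ y : Fin n → ℝ, (Mbar *ᵥ y) ⬝ᵥ y = stmt15NY P A re xe γ y := by
    intro y
    rw [← hMy y, stmt15_adj P hP A re xe γ y]
    unfold stmt15NY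
    simp only [dotProduct, Pi.smul_apply, smul_eq_mul, pow_two]
  -- T is nonempty and bounded above
  have hone : (fun _ : Fin n => (1 : ℝ)) ≠ 0 := by
    intro h
    exact one_ne_zero (congrFun h i0)
  have hTne : T.Nonempty :=
    ⟨_, ⟨(fun _ => 1), hone, rfl⟩⟩
  have hTbdd : BddAbove T := by
    refine ⟨frobNorm Mbar, ?_⟩
    rintro t ⟨y, hy, rfl⟩
    rw [div_le_iff₀ (stmt15_euclNorm_pos hy)]
    exact stmt15_mulVec_frob_le Mbar y
  have hν0 : 0 ≤ specNorm Mbar := by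
    have h1 := le_csSup hTbdd (⟨(fun _ => 1), hone, rfl⟩ :
      euclNorm (Mbar *ᵥ fun _ => 1) / euclNorm (fun _ : Fin n => (1:ℝ)) ∈ T)
    have h2 : 0 ≤ euclNorm (Mbar *ᵥ fun _ => 1) / euclNorm (fun _ : Fin n => (1:ℝ)) :=
      div_nonneg (stmt15_euclNorm_nonneg _) (stmt15_euclNorm_nonneg _)
    rw [hspec]; linarith
  have hνub : ∀ y : Fin n → ℝ, euclNorm (Mbar *ᵥ y) ≤ specNorm Mbar * euclNorm y := by
    intro y
    by_cases hy : y = 0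
    · subst hy
      simp [Matrix.mulVec_zero, euclNorm, mul_nonneg hν0 (Real.sqrt_nonneg _)]
    · have h1 := le_csSup hTbdd (⟨y, hy, rfl⟩ : euclNorm (Mbar *ᵥ y) / euclNorm y ∈ T)
      rw [hspec]
      exact (div_le_iff₀ (stmt15_euclNorm_pos hy)).1 h1
  have hNYle : ∀ y : Fin n → ℝ,
      Real.sqrt (stmt15NY P A re xe γ y) ≤ Real.sqrt (specNorm Mbar) * euclNorm y := by
    intro y
    have h1 : stmt15NY P A re xe γ y ≤ specNorm Mbar * euclNorm y ^ 2 := by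
      rw [← hNYval y]
      have h2 := stmt15_dot_le (Mbar *ᵥ y) y
      have h3 := hνub y
      have h4 := stmt15_euclNorm_nonneg y
      nlinarith
    calc Real.sqrt (stmt15NY P A re xe γ y)
        ≤ Real.sqrt (specNorm Mbar * euclNorm y ^ 2) := Real.sqrt_le_sqrt h1
      _ = Real.sqrt (specNorm Mbar) * euclNorm y := by
          rw [Real.sqrt_mul hν0, Real.sqrt_sq (stmt15_euclNorm_nonneg y)]
  -- upper bound on the numerator
  have hub : ∀ (E : Matrix (Fin m) (Fin n) ℝ) (f : Fin m → ℝ) (g : Fin n → ℝ),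
      euclNorm (P *ᵥ (Eᵀ *ᵥ re) - (P * Aᵀ) *ᵥ (E *ᵥ xe) + (P * Aᵀ) *ᵥ f + γ • (P *ᵥ g))
        ≤ Real.sqrt (specNorm Mbar) *
          Real.sqrt ((∑ i, ∑ j, E i j ^ 2) + (∑ i, f i ^ 2) + ∑ j, g j ^ 2) := by
    intro E f g
    set y := P *ᵥ (Eᵀ *ᵥ re) - (P * Aᵀ) *ᵥ (E *ᵥ xe) + (P * Aᵀ) *ᵥ f + γ • (P *ᵥ g) with hy
    have h1 : euclNorm y ^ 2 = y ⬝ᵥ y := stmt15_euclNorm_sq' y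
    have h2 : y ⬝ᵥ y ≤
        Real.sqrt ((∑ i, ∑ j, E i j ^ 2) + (∑ i, f i ^ 2) + ∑ j, g j ^ 2) *
          Real.sqrt (stmt15NY P A re xe γ y) := by
      rw [hy]
      rw [stmt15_adj P hP A re xe γ y E f g]
      unfold stmt15NY
      exact stmt15_cs3 E _ f _ g _
    have h3 := hNYle y
    have h4 := stmt15_euclNorm_nonneg y
    have h5 : (0:ℝ) ≤ Real.sqrt ((∑ i, ∑ j, E i j ^ 2) + (∑ i, f i ^ 2) + ∑ j, g j ^ 2) :=
      Real.sqrt_nonneg _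
    have h6 : (0:ℝ) ≤ Real.sqrt (specNorm Mbar) := Real.sqrt_nonneg _
    rcases h4.lt_or_eq with h7 | h7
    · have h8 : euclNorm y ^ 2 ≤
          (Real.sqrt ((∑ i, ∑ j, E i j ^ 2) + (∑ i, f i ^ 2) + ∑ j, g j ^ 2) *
            (Real.sqrt (specNorm Mbar) * euclNorm y)) := by
        calc euclNorm y ^ 2 = y ⬝ᵥ y := h1
          _ ≤ _ := h2
          _ ≤ _ := by
              have := Real.sqrt_nonneg (stmt15NY P A re xe γ y)
              exact mul_le_mul_of_nonneg_left h3 h5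
      nlinarith
    · rw [← h7]
      positivity
  -- positivity of the denominator for admissible perturbations
  have hD2 : ∀ (E : Matrix (Fin m) (Fin n) ℝ) (f : Fin m → ℝ) (g : Fin n → ℝ),
      ¬(E = 0 ∧ f = 0 ∧ g = 0) →
      0 < (∑ i, ∑ j, E i j ^ 2) + (∑ i, f i ^ 2) + ∑ j, g j ^ 2 := by
    intro E f g hne
    have hE : (0:ℝ) ≤ ∑ i, ∑ j, E i j ^ 2 := by positivity
    have hf : (0:ℝ) ≤ ∑ i, f i ^ 2 := by positivity
    have hg : (0:ℝ) ≤ ∑ j, g j ^ 2 := by positivity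
    rcases lt_or_eq_of_le (by positivity :
        (0:ℝ) ≤ (∑ i, ∑ j, E i j ^ 2) + (∑ i, f i ^ 2) + ∑ j, g j ^ 2) with h | h
    · exact h
    · exfalso
      apply hne
      refine ⟨stmt15_sum_sq_mat_eq_zero (by linarith), stmt15_sum_sq_eq_zero (by linarith),
        stmt15_sum_sq_eq_zero (by linarith)⟩
  -- denominator rewriting
  have hden : ∀ (E : Matrix (Fin m) (Fin n) ℝ) (f : Fin m → ℝ) (g : Fin n → ℝ),
      frobNorm E ^ 2 + euclNorm f ^ 2 + euclNorm g ^ 2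
        = (∑ i, ∑ j, E i j ^ 2) + (∑ i, f i ^ 2) + ∑ j, g j ^ 2 := by
    intro E f g
    rw [stmt15_frobNorm_sq, stmt15_euclNorm_sq, stmt15_euclNorm_sq]
  -- every element of S is at most √ν
  have hSb : ∀ t ∈ {t : ℝ | ∃ (E : Matrix (Fin m) (Fin n) ℝ) (f : Fin m → ℝ) (g : Fin n → ℝ),
      ¬(E = 0 ∧ f = 0 ∧ g = 0) ∧
      t = euclNorm (P *ᵥ (Eᵀ *ᵥ re) - (P * Aᵀ) *ᵥ (E *ᵥ xe) + (P * Aᵀ) *ᵥ f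
            + γ • (P *ᵥ g))
          / Real.sqrt (frobNorm E ^ 2 + euclNorm f ^ 2 + euclNorm g ^ 2)},
      t ≤ Real.sqrt (specNorm Mbar) := by
    rintro t ⟨E, f, g, hne, rfl⟩
    rw [hden E f g, div_le_iff₀ (Real.sqrt_pos.2 (hD2 E f g hne))]
    exact hub E f g
  -- S is nonempty
  have hSne : Set.Nonempty {t : ℝ | ∃ (E : Matrix (Fin m) (Fin n) ℝ) (f : Fin m → ℝ)
      (g : Fin n → ℝ), ¬(E = 0 ∧ f = 0 ∧ g = 0) ∧
      t = euclNorm (P *ᵥ (Eᵀ *ᵥ re) - (P * Aᵀ) *ᵥ (E *ᵥ xe) + (P * Aᵀ) *ᵥ f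
            + γ • (P *ᵥ g))
          / Real.sqrt (frobNorm E ^ 2 + euclNorm f ^ 2 + euclNorm g ^ 2)} := by
    refine ⟨_, 0, 0, (fun _ => 1), ?_, rfl⟩
    rintro ⟨-, -, h⟩
    exact one_ne_zero (congrFun h i0)
  have hSbdd : BddAbove {t : ℝ | ∃ (E : Matrix (Fin m) (Fin n) ℝ) (f : Fin m → ℝ)
      (g : Fin n → ℝ), ¬(E = 0 ∧ f = 0 ∧ g = 0) ∧
      t = euclNorm (P *ᵥ (Eᵀ *ᵥ re) - (P * Aᵀ) *ᵥ (E *ᵥ xe) + (P * Aᵀ) *ᵥ f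
            + γ • (P *ᵥ g))
          / Real.sqrt (frobNorm E ^ 2 + euclNorm f ^ 2 + euclNorm g ^ 2)} :=
    ⟨Real.sqrt (specNorm Mbar), hSb⟩
  set σ := sSup {t : ℝ | ∃ (E : Matrix (Fin m) (Fin n) ℝ) (f : Fin m → ℝ)
      (g : Fin n → ℝ), ¬(E = 0 ∧ f = 0 ∧ g = 0) ∧
      t = euclNorm (P *ᵥ (Eᵀ *ᵥ re) - (P * Aᵀ) *ᵥ (E *ᵥ xe) + (P * Aᵀ) *ᵥ f
            + γ • (P *ᵥ g))
          / Real.sqrt (frobNorm E ^ 2 + euclNorm f ^ 2 + euclNorm g ^ 2)} with hσ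
  have hσ0 : 0 ≤ σ := by
    obtain ⟨t0, ht0⟩ := hSne
    have h1 : 0 ≤ t0 := by
      obtain ⟨E, f, g, -, rfl⟩ := ht0
      exact div_nonneg (stmt15_euclNorm_nonneg _) (Real.sqrt_nonneg _)
    exact le_trans h1 (le_csSup hSbdd ht0)
  -- per-element bound in terms of σ
  have hLle : ∀ (E : Matrix (Fin m) (Fin n) ℝ) (f : Fin m → ℝ) (g : Fin n → ℝ),
      euclNorm (P *ᵥ (Eᵀ *ᵥ re) - (P * Aᵀ) *ᵥ (E *ᵥ xe) + (P * Aᵀ) *ᵥ f + γ • (P *ᵥ g))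
        ≤ σ * Real.sqrt ((∑ i, ∑ j, E i j ^ 2) + (∑ i, f i ^ 2) + ∑ j, g j ^ 2) := by
    intro E f g
    by_cases hz : E = 0 ∧ f = 0 ∧ g = 0
    · obtain ⟨hE, hf, hg⟩ := hz
      subst hE; subst hf; subst hg
      simp only [Matrix.transpose_zero, Matrix.zero_mulVec, Matrix.mulVec_zero, smul_zero,
        sub_zero, add_zero, zero_add]
      have : euclNorm (0 : Fin n → ℝ) = 0 := by simp [euclNorm]
      rw [this]
      positivity
    · have hmem : euclNorm (P *ᵥ (Eᵀ *ᵥ re) - (P * Aᵀ) *ᵥ (E *ᵥ xe) + (P * Aᵀ) *ᵥ f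
            + γ • (P *ᵥ g))
          / Real.sqrt (frobNorm E ^ 2 + euclNorm f ^ 2 + euclNorm g ^ 2)
          ∈ {t : ℝ | ∃ (E : Matrix (Fin m) (Fin n) ℝ) (f : Fin m → ℝ) (g : Fin n → ℝ),
            ¬(E = 0 ∧ f = 0 ∧ g = 0) ∧
            t = euclNorm (P *ᵥ (Eᵀ *ᵥ re) - (P * Aᵀ) *ᵥ (E *ᵥ xe) + (P * Aᵀ) *ᵥ f
                  + γ • (P *ᵥ g))
                / Real.sqrt (frobNorm E ^ 2 + euclNorm f ^ 2 + euclNorm g ^ 2)} :=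
        ⟨E, f, g, hz, rfl⟩
      have h1 := le_csSup hSbdd hmem
      rw [hden E f g, div_le_iff₀ (Real.sqrt_pos.2 (hD2 E f g hz))] at h1
      rw [mul_comm] at h1
      rw [mul_comm]
      exact h1
  -- ν ≤ σ²
  have hTub : ∀ t ∈ T, t ≤ σ ^ 2 := by
    rintro t ⟨y, hy, rfl⟩
    have key1 : euclNorm (Mbar *ᵥ y) ≤ σ * Real.sqrt (stmt15NY P A re xe γ y) := by
      rw [← hMy y]
      exact hLle (vecMulVec re (P *ᵥ y) - vecMulVec (A *ᵥ (P *ᵥ y)) xe)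
        (A *ᵥ (P *ᵥ y)) (γ • (P *ᵥ y))
    have key2 : Real.sqrt (stmt15NY P A re xe γ y) ≤ σ * euclNorm y := by
      set s := Real.sqrt (stmt15NY P A re xe γ y) with hs
      have hs0 : 0 ≤ s := Real.sqrt_nonneg _
      have hssq : s ^ 2 = stmt15NY P A re xe γ y :=
        Real.sq_sqrt (stmt15NY_nonneg P A re xe γ y)
      have h1 : s ^ 2 ≤ σ * s * euclNorm y := by
        rw [hssq, ← hNYval y]
        have h2 := stmt15_dot_le (Mbar *ᵥ y) y
        have h3 := key1
        have h4 := stmt15_euclNorm_nonneg y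
        nlinarith
      rcases hs0.lt_or_eq with h5 | h5
      · nlinarith
      · rw [← h5]
        exact mul_nonneg hσ0 (stmt15_euclNorm_nonneg y)
    have key3 : euclNorm (Mbar *ᵥ y) ≤ σ ^ 2 * euclNorm y := by
      calc euclNorm (Mbar *ᵥ y) ≤ σ * Real.sqrt (stmt15NY P A re xe γ y) := key1
        _ ≤ σ * (σ * euclNorm y) := mul_le_mul_of_nonneg_left key2 hσ0
        _ = σ ^ 2 * euclNorm y := by ring
    rw [div_le_iff₀ (stmt15_euclNorm_pos hy)]
    exact key3
  have hνσ : specNorm Mbar ≤ σ ^ 2 := by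
    rw [hspec]
    exact csSup_le hTne hTub
  have hfinal : Real.sqrt (specNorm Mbar) ≤ σ := by
    calc Real.sqrt (specNorm Mbar) ≤ Real.sqrt (σ ^ 2) := Real.sqrt_le_sqrt hνσ
      _ = σ := Real.sqrt_sq hσ0
  exact le_antisymm (csSup_le hSne hSb) hfinal

/-- Theorem 5.1: structured absolute condition number of the CGLSε
reformulation. The operator norm of
`L_ε(E,f,g) = (A_εᵀA_ε)⁻¹Eᵀr_ε − (A_εᵀA_ε)⁻¹AᵀEx_ε + (A_εᵀA_ε)⁻¹Aᵀf + γ(A_εᵀA_ε)⁻¹g`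
with respect to `‖[E,f,g]‖_F` on the domain and the Euclidean norm on the range equals
`sqrt(‖M̄_ε‖)`. -/
theorem stmt15 {m n : ℕ} (hn : 0 < n) (hmn : n ≤ m)
    (A : Matrix (Fin m) (Fin n) ℝ) (hA : A.rank = n)
    (b : Fin m → ℝ) (c : Fin n → ℝ) (ε : ℝ) (hε : 0 < ε)
    (Aeps : Matrix (Fin (m + 1)) (Fin n) ℝ)
    (hAeps : Aeps = Matrix.of (Fin.snoc (fun i => A i) (fun j => ε * c j)))
    (xe : Fin n → ℝ) (hxe : xe = (Aepsᵀ * Aeps)⁻¹ *ᵥ (Aᵀ *ᵥ b + c))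
    (re : Fin m → ℝ) (hre : re = b - A *ᵥ xe)
    (γ : ℝ) (hγ : γ = 1 - 2 * ε * (c ⬝ᵥ xe))
    (Be : Matrix (Fin n) (Fin n) ℝ)
    (hBe : Be = (Aepsᵀ * Aeps)⁻¹ * Aᵀ * vecMulVec re xe * (Aepsᵀ * Aeps)⁻¹)
    (Mbar : Matrix (Fin n) (Fin n) ℝ)
    (hM : Mbar = (γ ^ 2 + euclNorm re ^ 2) • ((Aepsᵀ * Aeps)⁻¹ * (Aepsᵀ * Aeps)⁻¹)
        + (1 + euclNorm xe ^ 2) • ((Aepsᵀ * Aeps)⁻¹ * (Aᵀ * A) * (Aepsᵀ * Aeps)⁻¹)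
        - (2 : ℝ) • ((1 / 2 : ℝ) • (Be + Beᵀ))) :
    sSup {t : ℝ | ∃ (E : Matrix (Fin m) (Fin n) ℝ) (f : Fin m → ℝ) (g : Fin n → ℝ),
        ¬(E = 0 ∧ f = 0 ∧ g = 0) ∧
        t = euclNorm ((Aepsᵀ * Aeps)⁻¹ *ᵥ (Eᵀ *ᵥ re)
              - ((Aepsᵀ * Aeps)⁻¹ * Aᵀ) *ᵥ (E *ᵥ xe)
              + ((Aepsᵀ * Aeps)⁻¹ * Aᵀ) *ᵥ f
              + γ • ((Aepsᵀ * Aeps)⁻¹ *ᵥ g))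
            / Real.sqrt (frobNorm E ^ 2 + euclNorm f ^ 2 + euclNorm g ^ 2)} =
      Real.sqrt (specNorm Mbar) := by
  have hP : ((Aepsᵀ * Aeps)⁻¹)ᵀ = (Aepsᵀ * Aeps)⁻¹ := by
    rw [Matrix.transpose_nonsing_inv, Matrix.transpose_mul, Matrix.transpose_transpose]
  subst hBe
  exact stmt15_abstract hn _ hP A re xe γ Mbar hM
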